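/- Let k be an algebraically closed field, Λ a basic finite-dimensional k-algebra, and let M and N be d-dimensional Λ-modules. Suppose there exist composition series (0) = M_0 ⊆ M_1 ⊆ ⋯ ⊆ M_d = M and (0) = N_0 ⊆ N_1 ⊆ ⋯ ⊆ N_d = N such that M_i/M_{i-1} ≅ N_i/N_{i-1} for all 1 ≤ i ≤ d. Then for any orthogonal set E of idempotents in Λ, there exist triangular representations μ and ν of M and N respectively such that μ(e) = ν(e) for all e ∈ E. -/

import Mathlib

universe u

/-- A set of idempotents of `Λ` which is orthogonal: any two distinct members multiply to `0`. -/
def IsOrthogonalIdempotentSet (Λ : Type u) [Ring Λ] (E : Set Λ) : Prop :=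
  (∀ e ∈ E, IsIdempotentElem e) ∧ ∀ e ∈ E, ∀ f ∈ E, e ≠ f → e * f = 0

/-- A representation `ρ : Λ → M_d(k)` represents the module `M` if `k^d` with the `Λ`-action
`l • v := ρ(l) * v` is isomorphic to `M`, i.e. there is a `k`-linear equivalence
`k^d ≃ M` intertwining the actions. -/
def Represents {k : Type u} [Field k] {Λ : Type u} [Ring Λ] [Algebra k Λ] {d : ℕ}
    (ρ : Λ →ₐ[k] Matrix (Fin d) (Fin d) k)
    (M : Type u) [AddCommGroup M] [Module k M] [Module Λ M] [IsScalarTower k Λ M] : Prop :=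
  ∃ e : (Fin d → k) ≃ₗ[k] M, ∀ (l : Λ) (v : Fin d → k), e ((ρ l).mulVec v) = l • e v

/-- The subquotient `P / Q` of a module given by two submodules. -/
abbrev SubQuot {Λ : Type u} [Ring Λ] {M : Type u} [AddCommGroup M] [Module Λ M]
    (P Q : Submodule Λ M) : Type u :=
  P ⧸ Submodule.comap P.subtype Q

section Helpers

variable {k : Type u} [Field k] {Λ : Type u} [Ring Λ] [Algebra k Λ]
variable {M : Type u} [AddCommGroup M] [Module k M] [Module Λ M] [IsScalarTower k Λ M]

lemma lsmul_comm' (l : Λ) (c : k) (x : M) : l • (c • x) = c • (l • x) := by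
  rw [← algebraMap_smul Λ c x, ← mul_smul, ← Algebra.commutes, mul_smul, algebraMap_smul]


lemma scalar_cancel {P : Submodule Λ M} {x : M} (hx : x ∉ P) {c : k} (h : c • x ∈ P) : c = 0 := by
  by_contra hc
  exact hx (by simpa [smul_smul, inv_mul_cancel₀ hc] using P.smul_of_tower_mem c⁻¹ h)

lemma subquot_mk_eq_iff {P Q : Submodule Λ M} {x y : P} :
    (Submodule.Quotient.mk x : SubQuot P Q) = Submodule.Quotient.mk y ↔
      (x : M) - (y : M) ∈ Q := by
  rw [Submodule.Quotient.eq, Submodule.mem_comap]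
  simp

lemma subquot_mk_eq_zero {P Q : Submodule Λ M} {x : P} :
    (Submodule.Quotient.mk x : SubQuot P Q) = 0 ↔ (x : M) ∈ Q := by
  rw [Submodule.Quotient.mk_eq_zero, Submodule.mem_comap]
  simp

end Helpers

lemma exists_tri
    (k Λ : Type u) [Field k] [Ring Λ] [Algebra k Λ] [FiniteDimensional k Λ]
    (d : ℕ)
    (M : Type u) [AddCommGroup M] [Module k M] [Module Λ M] [IsScalarTower k Λ M]
    [FiniteDimensional k M] (hdimM : Module.finrank k M = d)
    (Mser : Fin (d + 1) → Submodule Λ M)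
    (hM0 : Mser 0 = ⊥) (hMtop : Mser (Fin.last d) = ⊤) (hMmono : Monotone Mser)
    (χ : Fin d → Λ → k)
    (hchi : ∀ (i : Fin d) (l : Λ), ∀ x ∈ Mser i.succ, l • x - χ i l • x ∈ Mser i.castSucc)
    (hne : ∀ i : Fin d, ∃ x, x ∈ Mser i.succ ∧ x ∉ Mser i.castSucc)
    (hone : ∀ i : Fin d, ∀ x ∈ Mser i.succ, ∀ y ∈ Mser i.succ, y ∉ Mser i.castSucc →
      ∃ c : k, x - c • y ∈ Mser i.castSucc)
    (E : Set Λ) (hE : IsOrthogonalIdempotentSet Λ E) :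
    ∃ μ : Λ →ₐ[k] Matrix (Fin d) (Fin d) k,
      (∀ l : Λ, (μ l).BlockTriangular id) ∧ Represents μ M ∧
      ∀ e ∈ E, μ e = Matrix.diagonal fun i => χ i e := by
  obtain ⟨hEidem, hEorth⟩ := hE
  -- multiplicativity of the characters
  have hmul : ∀ (i : Fin d) (l1 l2 : Λ), χ i (l1 * l2) = χ i l1 * χ i l2 := by
    intro i l1 l2
    obtain ⟨x, hx1, hx2⟩ := hne i
    have t1 : l1 • (l2 • x - χ i l2 • x) ∈ Mser i.castSucc :=
      (Mser i.castSucc).smul_mem l1 (hchi i l2 x hx1)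
    have t2 : χ i l2 • (l1 • x - χ i l1 • x) ∈ Mser i.castSucc :=
      (Mser i.castSucc).smul_of_tower_mem _ (hchi i l1 x hx1)
    have hA : (l1 * l2) • x - (χ i l1 * χ i l2) • x ∈ Mser i.castSucc := by
      have h := add_mem t1 t2
      convert h using 1
      rw [smul_sub, smul_sub, lsmul_comm' l1 (χ i l2) x, smul_smul,
        smul_smul (χ i l2) (χ i l1) x, mul_comm (χ i l2) (χ i l1)]
      abel
    have hC : (χ i (l1 * l2) - χ i l1 * χ i l2) • x ∈ Mser i.castSucc := by
      have h := sub_mem hA (hchi i (l1 * l2) x hx1)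
      convert h using 1
      rw [sub_smul]
      abel
    have := scalar_cancel hx2 hC
    exact sub_eq_zero.mp this
  have hzero : ∀ i : Fin d, χ i 0 = 0 := by
    intro i
    obtain ⟨x, hx1, hx2⟩ := hne i
    have h := hchi i 0 x hx1
    rw [zero_smul, zero_sub] at h
    exact scalar_cancel hx2 (neg_mem_iff.mp h)
  have hchiE01 : ∀ (i : Fin d), ∀ e ∈ E, χ i e = 0 ∨ χ i e = 1 := by
    intro i e he
    have h := hmul i e e
    rw [hEidem e he] at h
    rcases eq_or_ne (χ i e) 0 with h0 | h0
    · exact Or.inl h0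
    · exact Or.inr (mul_left_cancel₀ h0 (by rw [mul_one, ← h]))
  have hchiorth : ∀ (i : Fin d), ∀ e ∈ E, ∀ f ∈ E, e ≠ f → χ i e * χ i f = 0 := by
    intro i e he f hf hef
    rw [← hmul, hEorth e he f hf hef, hzero]
  -- the nonzero elements of `E` form a finite set
  have hEfin : (E \ {0} : Set Λ).Finite := by
    have hli : LinearIndependent k (fun e : (E \ {0} : Set Λ) => (e : Λ)) := by
      rw [linearIndependent_iff']
      intro s g hg j hj
      have h := congrArg (fun y => (j : Λ) * y) hg
      simp only [Finset.mul_sum, mul_zero, mul_smul_comm] at h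
      rw [Finset.sum_eq_single j] at h
      · rw [hEidem _ j.2.1] at h
        exact (smul_eq_zero.mp h).resolve_right j.2.2
      · intro b _ hbj
        rw [hEorth _ j.2.1 _ b.2.1 (fun hh => hbj (Subtype.ext hh.symm)), smul_zero]
      · intro hjs; exact absurd hj hjs
    exact hli.setFinite
  -- eigenvector construction
  have hvex : ∀ i : Fin d, ∃ v, v ∈ Mser i.succ ∧ v ∉ Mser i.castSucc ∧
      ∀ e ∈ E, e • v = χ i e • v := by
    intro i
    obtain ⟨x, hx1, hx2⟩ := hne i
    by_cases hcase : ∃ e ∈ E, χ i e = 1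
    · obtain ⟨e0, he0, hche0⟩ := hcase
      refine ⟨e0 • x, (Mser i.succ).smul_mem e0 hx1, ?_, ?_⟩
      · intro hmem
        apply hx2
        have h1 : e0 • x - χ i e0 • x ∈ Mser i.castSucc := hchi i e0 x hx1
        rw [hche0, one_smul] at h1
        have h2 := sub_mem hmem h1
        simpa using h2
      · intro f hf
        by_cases hfe : f = e0
        · subst hfe
          rw [← mul_smul, hEidem f hf, hche0, one_smul]
        · have hf0 : χ i f = 0 := by
            have h := hchiorth i f hf e0 he0 hfe
            rwa [hche0, mul_one] at h
          rw [hf0, zero_smul, ← mul_smul, hEorth f hf e0 he0 hfe, zero_smul]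
    · have hall : ∀ e ∈ E, χ i e = 0 := fun e he =>
        (hchiE01 i e he).resolve_right (fun h1 => hcase ⟨e, he, h1⟩)
      refine ⟨x - ∑ e ∈ hEfin.toFinset, e • x, ?_, ?_, ?_⟩
      · exact sub_mem hx1 (Submodule.sum_mem _ fun e _ => (Mser i.succ).smul_mem e hx1)
      · intro hmem
        apply hx2
        have hsum : (∑ e ∈ hEfin.toFinset, e • x) ∈ Mser i.castSucc := by
          refine Submodule.sum_mem _ fun e hes => ?_
          have heE : e ∈ E := ((Set.Finite.mem_toFinset _).mp hes).1
          have h := hchi i e x hx1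
          rwa [hall e heE, zero_smul, sub_zero] at h
        have h2 := add_mem hmem hsum
        simpa using h2
      · intro f hf
        rw [hall f hf, zero_smul]
        by_cases hf0 : f = 0
        · subst hf0; rw [zero_smul]
        · have hfs : f ∈ hEfin.toFinset := (Set.Finite.mem_toFinset _).mpr ⟨hf, hf0⟩
          rw [smul_sub, Finset.smul_sum]
          have hsum : ∑ e ∈ hEfin.toFinset, f • e • x = f • x := by
            rw [Finset.sum_eq_single f]
            · rw [← mul_smul, hEidem f hf]
            · intro b hbs hbf
              have hbE : b ∈ E := ((Set.Finite.mem_toFinset _).mp hbs).1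
              rw [← mul_smul, hEorth f hf b hbE (Ne.symm hbf), zero_smul]
            · intro h; exact absurd hfs h
          rw [hsum, sub_self]
  choose v hv1 hv2 hv3 using hvex
  -- the submodules in the series are spanned by the initial segments of `v`
  have hspan : ∀ i : ℕ, ∀ hi : i ≤ d,
      (Mser ⟨i, Nat.lt_succ_of_le hi⟩).restrictScalars k
        = Submodule.span k (v '' {j : Fin d | (j : ℕ) < i}) := by
    intro i
    induction i with
    | zero =>
      intro _
      have hs : {j : Fin d | (j : ℕ) < 0} = ∅ := by ext j; simp
      rw [hs, Set.image_empty, Submodule.span_empty]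
      have h0 : (⟨0, Nat.lt_succ_of_le (Nat.zero_le d)⟩ : Fin (d+1)) = 0 := rfl
      rw [h0, hM0]
      rfl
    | succ n ih =>
      intro hi
      have hnd : n < d := hi
      have hn := ih (Nat.le_of_succ_le hi)
      set i' : Fin d := ⟨n, hnd⟩ with hi'
      have hsucc : (⟨n+1, Nat.lt_succ_of_le hi⟩ : Fin (d+1)) = i'.succ := rfl
      rw [hsucc]
      apply le_antisymm
      · intro x hx
        have hx' : x ∈ Mser i'.succ := hx
        obtain ⟨c, hc⟩ := hone i' x hx' (v i') (hv1 i') (hv2 i')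
        have hmem : x - c • v i' ∈ Submodule.span k (v '' {j : Fin d | (j : ℕ) < n}) := by
          rw [← hn]; exact hc
        have hxeq : x = (x - c • v i') + c • v i' := by abel
        rw [hxeq]
        refine Submodule.add_mem _ (Submodule.span_mono (Set.image_mono ?_) hmem)
          (Submodule.smul_mem _ c (Submodule.subset_span ⟨i', by simp [hi'], rfl⟩))
        intro j hj
        exact Nat.lt_succ_of_lt hj
      · have h1 : {j : Fin d | (j : ℕ) < n + 1} = insert i' {j : Fin d | (j : ℕ) < n} := by
          ext j
          simp [Nat.lt_succ_iff_lt_or_eq, Fin.ext_iff]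
          have : (i' : ℕ) = n := rfl
          omega
        rw [h1, Set.image_insert_eq, Submodule.span_insert]
        apply sup_le
        · rw [Submodule.span_singleton_le_iff_mem]
          exact hv1 i'
        · rw [← hn]
          intro y hy
          exact hMmono (show (⟨n, Nat.lt_succ_of_le (Nat.le_of_succ_le hi)⟩ : Fin (d+1))
            ≤ i'.succ from by simp [Fin.le_def, hi']) hy
  -- the basis
  have htop' : ⊤ ≤ Submodule.span k (Set.range v) := by
    have h := hspan d le_rfl
    have hl : (⟨d, Nat.lt_succ_of_le le_rfl⟩ : Fin (d+1)) = Fin.last d := rfl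
    rw [hl, hMtop] at h
    have huniv : {j : Fin d | (j : ℕ) < d} = Set.univ := by ext j; simp [j.isLt]
    rw [huniv, Set.image_univ] at h
    rw [← h]
    intro x _
    exact Submodule.mem_top
  let b : Module.Basis (Fin d) k M := basisOfTopLeSpanOfCardEqFinrank v htop' (by simp [hdimM])
  have hb : ⇑b = v := coe_basisOfTopLeSpanOfCardEqFinrank v htop' _
  have hrep0 : ∀ (x : M) (S : Set (Fin d)), x ∈ Submodule.span k (v '' S) →
      ∀ m ∉ S, b.repr x m = 0 := by
    intro x S hx m hm
    have hker : Submodule.span k (v '' S) ≤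
        LinearMap.ker ((Finsupp.lapply m).comp (b.repr : M →ₗ[k] (Fin d →₀ k))) := by
      rw [Submodule.span_le]
      rintro _ ⟨j, hjS, rfl⟩
      have hbj : v j = b j := (congrFun hb j).symm
      simp only [SetLike.mem_coe, LinearMap.mem_ker, LinearMap.comp_apply, Finsupp.lapply_apply,
        hbj, LinearEquiv.coe_coe, Module.Basis.repr_self]
      exact Finsupp.single_eq_of_ne' (fun hh => hm (hh ▸ hjS))
    exact hker hx
  let μ : Λ →ₐ[k] Matrix (Fin d) (Fin d) k :=
    (LinearMap.toMatrixAlgEquiv b).toAlgHom.comp (Algebra.lsmul k k M)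
  have hμtm : ∀ l : Λ, μ l = LinearMap.toMatrix b b (Algebra.lsmul k k M l) := fun l => rfl
  have hμapp : ∀ (l : Λ) (i j : Fin d), μ l i j = b.repr (l • b j) i := by
    intro l i j
    rw [hμtm, LinearMap.toMatrix_apply]
    rfl
  refine ⟨μ, ?_, ?_, ?_⟩
  · -- triangularity
    intro l i j hij
    have hji : (j : ℕ) < (i : ℕ) := hij
    rw [hμapp]
    have hbj : b j = v j := congrFun hb j
    have hjmem : l • b j ∈ Mser j.succ := by
      rw [hbj]; exact (Mser j.succ).smul_mem l (hv1 j)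
    have hsp := hspan ((j : ℕ) + 1) j.isLt
    have hjs : (⟨(j : ℕ) + 1, Nat.lt_succ_of_le j.isLt⟩ : Fin (d+1)) = j.succ := rfl
    rw [hjs] at hsp
    have hmem : l • b j ∈ Submodule.span k (v '' {m : Fin d | (m : ℕ) < (j : ℕ) + 1}) := by
      rw [← hsp]; exact hjmem
    exact hrep0 _ _ hmem i (by simp only [Set.mem_setOf_eq]; omega)
  · -- Represents
    refine ⟨b.equivFun.symm, ?_⟩
    intro l w
    set x := b.equivFun.symm w with hxdef
    have hw : (⇑(b.repr x) : Fin d → k) = w := by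
      rw [← Module.Basis.equivFun_apply, hxdef, LinearEquiv.apply_symm_apply]
    have hmv : (μ l).mulVec (⇑(b.repr x)) = ⇑(b.repr (l • x)) := by
      rw [hμtm]
      exact LinearMap.toMatrix_mulVec_repr b b (Algebra.lsmul k k M l) x
    rw [← hw, hmv]
    have hre : (⇑(b.repr (l • x)) : Fin d → k) = b.equivFun (l • x) := rfl
    rw [hre, LinearEquiv.symm_apply_apply]
  · -- diagonal on E
    intro e he
    ext i j
    rw [hμapp]
    have hbj : b j = v j := congrFun hb j
    rw [hbj, hv3 j e he, ← hbj, map_smul, Module.Basis.repr_self]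
    rcases eq_or_ne i j with rfl | hij
    · simp [Matrix.diagonal]
    · simp [Matrix.diagonal_apply_ne _ hij, Finsupp.single_eq_of_ne' (Ne.symm hij)]

/-- if the `d`-dimensional modules `M` and `N` over a basic finite-dimensional
algebra `Λ` over an algebraically closed field admit composition series with isomorphic factors
in the same order, then for every orthogonal set `E` of idempotents of `Λ` there are triangular
representations `μ`, `ν` of `M`, `N` with `μ(e) = ν(e)` for all `e ∈ E`. -/
theorem triangular_representations_of_compatible_composition_series
    (k : Type u) [Field k] [IsAlgClosed k]
    (Λ : Type u) [Ring Λ] [Algebra k Λ] [FiniteDimensional k Λ]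
    (hbasic : ∀ (S : Type u) [AddCommGroup S] [Module k S] [Module Λ S] [IsScalarTower k Λ S],
      IsSimpleModule Λ S → Module.finrank k S = 1)
    (d : ℕ)
    (M : Type u) [AddCommGroup M] [Module k M] [Module Λ M] [IsScalarTower k Λ M]
    [FiniteDimensional k M] (hdimM : Module.finrank k M = d)
    (N : Type u) [AddCommGroup N] [Module k N] [Module Λ N] [IsScalarTower k Λ N]
    [FiniteDimensional k N] (hdimN : Module.finrank k N = d)
    (Mser : Fin (d + 1) → Submodule Λ M) (Nser : Fin (d + 1) → Submodule Λ N)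
    (hM0 : Mser 0 = ⊥) (hMtop : Mser (Fin.last d) = ⊤) (hMmono : Monotone Mser)
    (hMsimple : ∀ i : Fin d, IsSimpleModule Λ (SubQuot (Mser i.succ) (Mser i.castSucc)))
    (hN0 : Nser 0 = ⊥) (hNtop : Nser (Fin.last d) = ⊤) (hNmono : Monotone Nser)
    (hNsimple : ∀ i : Fin d, IsSimpleModule Λ (SubQuot (Nser i.succ) (Nser i.castSucc)))
    (hiso : ∀ i : Fin d, Nonempty
      (SubQuot (Mser i.succ) (Mser i.castSucc) ≃ₗ[Λ] SubQuot (Nser i.succ) (Nser i.castSucc))) :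
    ∀ E : Set Λ, IsOrthogonalIdempotentSet Λ E →
      ∃ μ ν : Λ →ₐ[k] Matrix (Fin d) (Fin d) k,
        (∀ l : Λ, (μ l).BlockTriangular id) ∧ (∀ l : Λ, (ν l).BlockTriangular id) ∧
        Represents μ M ∧ Represents ν N ∧ ∀ e ∈ E, μ e = ν e := by
  intro E hE
  -- the characters of the composition factors of M
  have hchar : ∀ i : Fin d, ∃ χi : Λ → k,
      ∀ (l : Λ) (y : SubQuot (Mser i.succ) (Mser i.castSucc)), l • y = χi l • y := by
    intro i
    haveI := hMsimple i
    haveI : Nontrivial (SubQuot (Mser i.succ) (Mser i.castSucc)) :=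
      IsSimpleModule.nontrivial Λ _
    have h1 : Module.finrank k (SubQuot (Mser i.succ) (Mser i.castSucc)) = 1 :=
      hbasic _ (hMsimple i)
    obtain ⟨x0, hx0⟩ := exists_ne (0 : SubQuot (Mser i.succ) (Mser i.castSucc))
    have hsp : Submodule.span k {x0} = ⊤ := (finrank_eq_one_iff_of_nonzero x0 hx0).mp h1
    choose c hc using fun l : Λ =>
      Submodule.mem_span_singleton.mp (hsp.symm ▸ Submodule.mem_top (x := l • x0))
    refine ⟨c, fun l y => ?_⟩
    obtain ⟨a, ha⟩ := Submodule.mem_span_singleton.mp (hsp.symm ▸ Submodule.mem_top (x := y))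
    rw [← ha, lsmul_comm', ← hc l, smul_smul, smul_smul, mul_comm]
  choose χ hχ using hchar
  -- the characters computed inside M
  have hchiM : ∀ (i : Fin d) (l : Λ), ∀ x ∈ Mser i.succ, l • x - χ i l • x ∈ Mser i.castSucc := by
    intro i l x hx
    have h := hχ i l (Submodule.Quotient.mk (⟨x, hx⟩ : Mser i.succ))
    rw [← Submodule.Quotient.mk_smul, ← Submodule.Quotient.mk_smul, subquot_mk_eq_iff] at h
    simpa using h
  have hneM : ∀ i : Fin d, ∃ x, x ∈ Mser i.succ ∧ x ∉ Mser i.castSucc := by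
    intro i
    haveI := hMsimple i
    haveI : Nontrivial (SubQuot (Mser i.succ) (Mser i.castSucc)) :=
      IsSimpleModule.nontrivial Λ _
    obtain ⟨y, hy⟩ := exists_ne (0 : SubQuot (Mser i.succ) (Mser i.castSucc))
    obtain ⟨z, rfl⟩ := Submodule.Quotient.mk_surjective _ y
    exact ⟨z, z.2, fun hz => hy (subquot_mk_eq_zero.mpr hz)⟩
  have honeM : ∀ i : Fin d, ∀ x ∈ Mser i.succ, ∀ y ∈ Mser i.succ, y ∉ Mser i.castSucc →
      ∃ c : k, x - c • y ∈ Mser i.castSucc := by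
    intro i x hx y hy hy'
    haveI := hMsimple i
    have h1 : Module.finrank k (SubQuot (Mser i.succ) (Mser i.castSucc)) = 1 :=
      hbasic _ (hMsimple i)
    have hyq : (Submodule.Quotient.mk (⟨y, hy⟩ : Mser i.succ) :
        SubQuot (Mser i.succ) (Mser i.castSucc)) ≠ 0 :=
      fun h => hy' (subquot_mk_eq_zero.mp h)
    have hsp := (finrank_eq_one_iff_of_nonzero _ hyq).mp h1
    obtain ⟨c, hc⟩ := Submodule.mem_span_singleton.mp
      (hsp.symm ▸ Submodule.mem_top
        (x := (Submodule.Quotient.mk (⟨x, hx⟩ : Mser i.succ) :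
          SubQuot (Mser i.succ) (Mser i.castSucc))))
    refine ⟨c, ?_⟩
    rw [← Submodule.Quotient.mk_smul, subquot_mk_eq_iff] at hc
    simpa using neg_mem hc
  -- transfer to N along the isomorphisms
  have hchiN : ∀ (i : Fin d) (l : Λ), ∀ x ∈ Nser i.succ, l • x - χ i l • x ∈ Nser i.castSucc := by
    intro i l x hx
    have hq : ∀ y : SubQuot (Nser i.succ) (Nser i.castSucc), l • y = χ i l • y := by
      intro y
      obtain ⟨z, rfl⟩ : ∃ z, (hiso i).some z = y :=
        ⟨(hiso i).some.symm y, LinearEquiv.apply_symm_apply _ _⟩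
      rw [← map_smul, hχ i l z, ← algebraMap_smul Λ (χ i l) z, map_smul, algebraMap_smul]
    have h := hq (Submodule.Quotient.mk (⟨x, hx⟩ : Nser i.succ))
    rw [← Submodule.Quotient.mk_smul, ← Submodule.Quotient.mk_smul, subquot_mk_eq_iff] at h
    simpa using h
  have hneN : ∀ i : Fin d, ∃ x, x ∈ Nser i.succ ∧ x ∉ Nser i.castSucc := by
    intro i
    haveI := hNsimple i
    haveI : Nontrivial (SubQuot (Nser i.succ) (Nser i.castSucc)) :=
      IsSimpleModule.nontrivial Λ _
    obtain ⟨y, hy⟩ := exists_ne (0 : SubQuot (Nser i.succ) (Nser i.castSucc))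
    obtain ⟨z, rfl⟩ := Submodule.Quotient.mk_surjective _ y
    exact ⟨z, z.2, fun hz => hy (subquot_mk_eq_zero.mpr hz)⟩
  have honeN : ∀ i : Fin d, ∀ x ∈ Nser i.succ, ∀ y ∈ Nser i.succ, y ∉ Nser i.castSucc →
      ∃ c : k, x - c • y ∈ Nser i.castSucc := by
    intro i x hx y hy hy'
    haveI := hNsimple i
    have h1 : Module.finrank k (SubQuot (Nser i.succ) (Nser i.castSucc)) = 1 :=
      hbasic _ (hNsimple i)
    have hyq : (Submodule.Quotient.mk (⟨y, hy⟩ : Nser i.succ) :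
        SubQuot (Nser i.succ) (Nser i.castSucc)) ≠ 0 :=
      fun h => hy' (subquot_mk_eq_zero.mp h)
    have hsp := (finrank_eq_one_iff_of_nonzero _ hyq).mp h1
    obtain ⟨c, hc⟩ := Submodule.mem_span_singleton.mp
      (hsp.symm ▸ Submodule.mem_top
        (x := (Submodule.Quotient.mk (⟨x, hx⟩ : Nser i.succ) :
          SubQuot (Nser i.succ) (Nser i.castSucc))))
    refine ⟨c, ?_⟩
    rw [← Submodule.Quotient.mk_smul, subquot_mk_eq_iff] at hc
    simpa using neg_mem hc
  obtain ⟨μ, hμ1, hμ2, hμ3⟩ :=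
    exists_tri k Λ d M hdimM Mser hM0 hMtop hMmono χ hchiM hneM honeM E hE
  obtain ⟨ν, hν1, hν2, hν3⟩ :=
    exists_tri k Λ d N hdimN Nser hN0 hNtop hNmono χ hchiN hneN honeN E hE
  exact ⟨μ, ν, hμ1, hν1, hμ2, hν2, fun e he => by rw [hμ3 e he, hν3 e he]⟩
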